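/- Let H and H̃ be d×d symmetric positive definite matrices with (1−η)·H ⪯ H̃ for some η ∈ (0,1), let g ∈ ℝ^d, p̃ := H̃⁻¹g, and p⋆ := H⁻¹g. If p′ ∈ ℝ^d satisfies ‖H̃^{1/2}(p′ − p̃)‖₂ ≤ ε₀·‖H̃^{1/2} p̃‖₂ for some ε₀ ∈ (0,1), then ‖H^{1/2}(p′ − p̃)‖₂ ≤ (ε₀/(1−η))·‖H^{1/2} p⋆‖₂. -/

import Mathlib

open Matrix

namespace Matrix.PosSemidef

/-- The square root of a positive semidefinite matrix, as defined in Mathlib of December 2024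
(removed since). -/
noncomputable def sqrt {n : Type*} [Fintype n] [DecidableEq n] {𝕜 : Type*} [RCLike 𝕜]
    [PartialOrder 𝕜] [StarOrderedRing 𝕜]
    {A : Matrix n n 𝕜} (hA : A.PosSemidef) : Matrix n n 𝕜 :=
  hA.1.eigenvectorUnitary.1 * diagonal ((↑) ∘ (√·) ∘ hA.1.eigenvalues) *
    (star hA.1.eigenvectorUnitary : Matrix n n 𝕜)

end Matrix.PosSemidef

private lemma aux_sqrt_herm {d : ℕ} {M : Matrix (Fin d) (Fin d) ℝ} (hM : M.PosSemidef) :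
    star hM.sqrt = hM.sqrt := by
  unfold Matrix.PosSemidef.sqrt
  simp only [star_mul, star_star, mul_assoc]
  congr 1
  rw [star_eq_conjTranspose, diagonal_conjTranspose]
  congr 2

private lemma aux_sqrt_mul_self {d : ℕ} {M : Matrix (Fin d) (Fin d) ℝ} (hM : M.PosSemidef) :
    hM.sqrt * hM.sqrt = M := by
  conv_rhs => rw [hM.1.spectral_theorem]
  unfold Matrix.PosSemidef.sqrt
  rw [Unitary.conjStarAlgAut_apply]
  have hU := Unitary.coe_star_mul_self hM.1.eigenvectorUnitary
  calc _ = (hM.1.eigenvectorUnitary : Matrix (Fin d) (Fin d) ℝ) *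
        diagonal ((↑) ∘ (√·) ∘ hM.1.eigenvalues) *
        ((star hM.1.eigenvectorUnitary : Matrix (Fin d) (Fin d) ℝ) *
          (hM.1.eigenvectorUnitary : Matrix (Fin d) (Fin d) ℝ)) *
        diagonal ((↑) ∘ (√·) ∘ hM.1.eigenvalues) *
        (star hM.1.eigenvectorUnitary : Matrix (Fin d) (Fin d) ℝ) := by
          simp only [mul_assoc]
          rfl
    _ = _ := by
      rw [hU, mul_one, mul_assoc _ (diagonal _) (diagonal _), diagonal_mul_diagonal]
      congr 3
      funext i
      simp [Real.mul_self_sqrt (hM.eigenvalues_nonneg i)]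

open ContinuousLinearMap in
open scoped RealInnerProductSpace in
private lemma aux_inner_sqrt {d : ℕ} {M : Matrix (Fin d) (Fin d) ℝ} (hM : M.PosSemidef)
    (x y : EuclideanSpace ℝ (Fin d)) :
    ⟪x, Matrix.toEuclideanCLM (𝕜 := ℝ) M y⟫ =
      ⟪Matrix.toEuclideanCLM (𝕜 := ℝ) hM.sqrt x, Matrix.toEuclideanCLM (𝕜 := ℝ) hM.sqrt y⟫ := by
  set S := Matrix.toEuclideanCLM (𝕜 := ℝ) hM.sqrt with hS
  have hadj : adjoint S = S := by
    rw [← ContinuousLinearMap.star_eq_adjoint, hS, ← map_star]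
    congr 1
    exact aux_sqrt_herm hM
  have hmul : Matrix.toEuclideanCLM (𝕜 := ℝ) M = S * S := by
    rw [hS, ← _root_.map_mul, aux_sqrt_mul_self hM]
  rw [hmul]
  have := ContinuousLinearMap.adjoint_inner_right S x (S y)
  rw [hadj] at this
  exact this

open scoped RealInnerProductSpace in
private lemma aux_norm_sq_sqrt {d : ℕ} {M : Matrix (Fin d) (Fin d) ℝ} (hM : M.PosSemidef)
    (x : EuclideanSpace ℝ (Fin d)) :
    ‖Matrix.toEuclideanCLM (𝕜 := ℝ) hM.sqrt x‖ ^ 2 = ⟪x, Matrix.toEuclideanCLM (𝕜 := ℝ) M x⟫ := by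
  rw [aux_inner_sqrt hM, real_inner_self_eq_norm_sq]

open scoped RealInnerProductSpace in
private lemma aux_quad_eq_dot {d : ℕ} (M : Matrix (Fin d) (Fin d) ℝ)
    (x : EuclideanSpace ℝ (Fin d)) :
    ⟪x, Matrix.toEuclideanCLM (𝕜 := ℝ) M x⟫ =
      dotProduct (star (WithLp.equiv 2 _ x)) (M *ᵥ (WithLp.equiv 2 _ x)) := by
  rw [EuclideanSpace.inner_eq_star_dotProduct, ofLp_toEuclideanCLM, dotProduct_comm]
  rfl

open scoped RealInnerProductSpace in
/-- **Effect of inexactness measured in the true metric.**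
Let `H, H̃` be positive definite with `(1−η)H ⪯ H̃` for `η ∈ (0,1)`, `p̃ = H̃⁻¹g`,
`p⋆ = H⁻¹g`. If `‖H̃^{1/2}(p′ − p̃)‖₂ ≤ ε₀‖H̃^{1/2}p̃‖₂` with `ε₀ ∈ (0,1)`, then
`‖H^{1/2}(p′ − p̃)‖₂ ≤ (ε₀/(1−η))‖H^{1/2}p⋆‖₂`. -/
theorem inexact_direction_true_metric
    (d : ℕ) (H Htilde : Matrix (Fin d) (Fin d) ℝ)
    (hH : H.PosDef) (hHt : Htilde.PosDef)
    (η : ℝ) (hη : η ∈ Set.Ioo (0 : ℝ) 1)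
    (hlower : (Htilde - (1 - η) • H).PosSemidef)
    (g ptilde pstar p' : EuclideanSpace ℝ (Fin d))
    (hptilde : ptilde = Matrix.toEuclideanCLM (𝕜 := ℝ) Htilde⁻¹ g)
    (hpstar : pstar = Matrix.toEuclideanCLM (𝕜 := ℝ) H⁻¹ g)
    (ε₀ : ℝ) (hε₀ : ε₀ ∈ Set.Ioo (0 : ℝ) 1)
    (hinexact : ‖Matrix.toEuclideanCLM (𝕜 := ℝ) (hHt.posSemidef.sqrt) (p' - ptilde)‖
      ≤ ε₀ * ‖Matrix.toEuclideanCLM (𝕜 := ℝ) (hHt.posSemidef.sqrt) ptilde‖) :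
    ‖Matrix.toEuclideanCLM (𝕜 := ℝ) (hH.posSemidef.sqrt) (p' - ptilde)‖
      ≤ (ε₀ / (1 - η)) * ‖Matrix.toEuclideanCLM (𝕜 := ℝ) (hH.posSemidef.sqrt) pstar‖ := by
  obtain ⟨hη0, hη1⟩ := hη
  obtain ⟨hε0, hε1⟩ := hε₀
  have h1η : (0:ℝ) < 1 - η := by linarith
  set A := Matrix.toEuclideanCLM (𝕜 := ℝ) (hH.posSemidef.sqrt) with hA
  set B := Matrix.toEuclideanCLM (𝕜 := ℝ) (hHt.posSemidef.sqrt) with hB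
  set s := Real.sqrt (1 - η) with hs
  have hs0 : 0 < s := Real.sqrt_pos.mpr h1η
  have hs2 : s ^ 2 = 1 - η := Real.sq_sqrt h1η.le
  -- quadratic form comparison
  have hcmp : ∀ x : EuclideanSpace ℝ (Fin d), (1 - η) * ‖A x‖ ^ 2 ≤ ‖B x‖ ^ 2 := by
    intro x
    rw [hA, hB, aux_norm_sq_sqrt hH.posSemidef, aux_norm_sq_sqrt hHt.posSemidef,
        aux_quad_eq_dot, aux_quad_eq_dot]
    have h := hlower.dotProduct_mulVec_nonneg (WithLp.equiv 2 _ x)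
    rw [Matrix.sub_mulVec, Matrix.smul_mulVec, dotProduct_sub,
        dotProduct_smul] at h
    simp only [smul_eq_mul] at h
    linarith
  have hcmp' : ∀ x : EuclideanSpace ℝ (Fin d), s * ‖A x‖ ≤ ‖B x‖ := by
    intro x
    calc s * ‖A x‖ = Real.sqrt ((s * ‖A x‖) ^ 2) := (Real.sqrt_sq (by positivity)).symm
      _ ≤ Real.sqrt (‖B x‖ ^ 2) := Real.sqrt_le_sqrt (by rw [mul_pow, hs2]; exact hcmp x)
      _ = ‖B x‖ := Real.sqrt_sq (norm_nonneg _)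
  -- identities involving g
  have hBg : Matrix.toEuclideanCLM (𝕜 := ℝ) Htilde ptilde = g := by
    rw [hptilde]
    have h1 : Matrix.toEuclideanCLM (𝕜 := ℝ) Htilde (Matrix.toEuclideanCLM (𝕜 := ℝ) Htilde⁻¹ g)
        = Matrix.toEuclideanCLM (𝕜 := ℝ) (Htilde * Htilde⁻¹) g := by
      rw [_root_.map_mul]; rfl
    rw [h1, Matrix.mul_nonsing_inv _ hHt.det_pos.ne'.isUnit, _root_.map_one]; rfl
  have hHg : Matrix.toEuclideanCLM (𝕜 := ℝ) H pstar = g := by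
    rw [hpstar]
    have h1 : Matrix.toEuclideanCLM (𝕜 := ℝ) H (Matrix.toEuclideanCLM (𝕜 := ℝ) H⁻¹ g)
        = Matrix.toEuclideanCLM (𝕜 := ℝ) (H * H⁻¹) g := by
      rw [_root_.map_mul]; rfl
    rw [h1, Matrix.mul_nonsing_inv _ hH.det_pos.ne'.isUnit, _root_.map_one]; rfl
  -- key identity
  have key : ‖B ptilde‖ ^ 2 = ⟪A ptilde, A pstar⟫ := by
    rw [hB, aux_norm_sq_sqrt hHt.posSemidef, hBg, ← hHg, aux_inner_sqrt hH.posSemidef]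
  have hCS : ⟪A ptilde, A pstar⟫ ≤ ‖A ptilde‖ * ‖A pstar‖ := real_inner_le_norm _ _
  have h5 : s * ‖B ptilde‖ ≤ ‖A pstar‖ := by
    by_cases hu : ‖B ptilde‖ = 0
    · rw [hu, mul_zero]; exact norm_nonneg _
    · have hu0 : 0 < ‖B ptilde‖ := lt_of_le_of_ne (norm_nonneg _) (Ne.symm hu)
      have h1 : ‖B ptilde‖ ^ 2 ≤ ‖A ptilde‖ * ‖A pstar‖ := key ▸ hCS
      have h2 := hcmp' ptilde
      nlinarith [norm_nonneg (A pstar), norm_nonneg (A ptilde)]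
  have hfinal : s * ‖A (p' - ptilde)‖ ≤ ε₀ * ‖B ptilde‖ := (hcmp' _).trans hinexact
  rw [div_mul_eq_mul_div, le_div_iff₀ h1η]
  nlinarith [norm_nonneg (A (p' - ptilde)), norm_nonneg (B ptilde)]
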